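/- Let S be a real symmetric positive definite matrix and k > 0. Then the matrix 120·I + 60kS + 12(kS)² + (kS)³ is invertible, and the matrix M = (120·I + 60kS + 12(kS)² + (kS)³)⁻¹(120·I - 60kS + 12(kS)² - (kS)³) has spectral radius strictly less than 1. -/

import Mathlib

open Matrix

/-- For a real symmetric positive definite matrix `S` and `k > 0`, the matrix
`P = 120·I + 60kS + 12(kS)² + (kS)³` is invertible, and the iteration matrix
`M = P⁻¹ (120·I - 60kS + 12(kS)² - (kS)³)` has spectral radius strictly less
than `1`: every complex eigenvalue `μ` of `M` satisfies `|μ| < 1`. -/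
theorem pade33_iteration_matrix_spectral_radius_lt_one
    {n : Type*} [Fintype n] [DecidableEq n]
    (S : Matrix n n ℝ) (hS : S.PosDef) (k : ℝ) (hk : 0 < k) :
    IsUnit ((120 : ℝ) • (1 : Matrix n n ℝ) + 60 • (k • S) + 12 • (k • S) ^ 2 + (k • S) ^ 3) ∧
    ∀ μ ∈ spectrum ℂ
      ((((120 : ℝ) • (1 : Matrix n n ℝ) + 60 • (k • S) + 12 • (k • S) ^ 2 + (k • S) ^ 3)⁻¹ *
        ((120 : ℝ) • (1 : Matrix n n ℝ) - 60 • (k • S) + 12 • (k • S) ^ 2 - (k • S) ^ 3)).map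
          (algebraMap ℝ ℂ)),
      ‖μ‖ < 1 := by
  set A : Matrix n n ℝ := k • S with hAdef
  have hAh : A.IsHermitian := by
    unfold Matrix.IsHermitian
    rw [hAdef, conjTranspose_smul, star_trivial, hS.1.eq]
  have hAp : A.PosDef := by
    refine posDef_iff_dotProduct_mulVec.mpr ⟨hAh, fun x hx => ?_⟩
    have h := (posDef_iff_dotProduct_mulVec.mp hS).2 hx
    simp only [hAdef, smul_mulVec, dotProduct_smul, smul_eq_mul] at *
    exact mul_pos hk h
  set U : Matrix n n ℝ := (hAh.eigenvectorUnitary : Matrix n n ℝ) with hUdef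
  set V : Matrix n n ℝ := star U with hVdef
  set d : n → ℝ := hAh.eigenvalues with hddef
  have hdpos : ∀ i, 0 < d i := fun i => hAp.eigenvalues_pos i
  have hUV : U * V = 1 := Matrix.mem_unitaryGroup_iff.mp hAh.eigenvectorUnitary.2
  have hVU : V * U = 1 := Matrix.mem_unitaryGroup_iff'.mp hAh.eigenvectorUnitary.2
  have h1 : A = U * diagonal d * V := by
    have := hAh.spectral_theorem
    rwa [RCLike.ofReal_real_eq_id, Function.id_comp] at this
  have key : ∀ f g : n → ℝ, (U * diagonal f * V) * (U * diagonal g * V)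
      = U * diagonal (fun i => f i * g i) * V := by
    intro f g
    simp only [mul_assoc]
    rw [← mul_assoc V U, hVU, one_mul, ← mul_assoc (diagonal f), diagonal_mul_diagonal]
  have h2 : A ^ 2 = U * diagonal (fun i => d i ^ 2) * V := by
    have e : (fun i => d i * d i) = fun i => d i ^ 2 := by funext i; ring
    rw [sq, h1, key, e]
  have h3 : A ^ 3 = U * diagonal (fun i => d i ^ 3) * V := by
    have e : (fun i => d i ^ 2 * d i) = fun i => d i ^ 3 := by funext i; ring
    rw [pow_succ, h2, h1, key, e]
  have e1 : (1 : Matrix n n ℝ) = U * diagonal (fun _ => (1 : ℝ)) * V := by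
    rw [diagonal_one, mul_one, hUV]
  set pd : n → ℝ := fun i => 120 + 60 * d i + 12 * d i ^ 2 + d i ^ 3 with hpddef
  set qd : n → ℝ := fun i => 120 - 60 * d i + 12 * d i ^ 2 - d i ^ 3 with hqddef
  have hpdpos : ∀ i, 0 < pd i := by
    intro i
    have := hdpos i
    simp only [hpddef]
    nlinarith [sq_nonneg (d i), pow_pos (hdpos i) 3]
  have hdiagP : (120 : ℝ) • diagonal (fun _ => (1:ℝ)) + 60 • diagonal d
      + 12 • diagonal (fun i => d i ^ 2) + diagonal (fun i => d i ^ 3) = diagonal pd := by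
    funext i j
    rcases eq_or_ne i j with rfl | hij
    · simp only [Matrix.add_apply, Matrix.smul_apply, diagonal_apply_eq]
      simp only [smul_eq_mul, nsmul_eq_mul, hpddef]
      push_cast; ring
    · simp only [Matrix.add_apply, Matrix.smul_apply, diagonal_apply_ne _ hij, smul_zero,
        add_zero]
  have hP : (120 : ℝ) • (1 : Matrix n n ℝ) + 60 • A + 12 • A ^ 2 + A ^ 3
      = U * diagonal pd * V := by
    rw [h3, h2, h1, e1, ← hdiagP]
    simp only [Matrix.mul_add, Matrix.add_mul, mul_smul_comm, smul_mul_assoc]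
  have hdiagQ : (120 : ℝ) • diagonal (fun _ => (1:ℝ)) - 60 • diagonal d
      + 12 • diagonal (fun i => d i ^ 2) - diagonal (fun i => d i ^ 3) = diagonal qd := by
    funext i j
    rcases eq_or_ne i j with rfl | hij
    · simp only [Matrix.add_apply, Matrix.sub_apply, Matrix.smul_apply, diagonal_apply_eq]
      simp only [smul_eq_mul, nsmul_eq_mul, hqddef]
      push_cast; ring
    · simp only [Matrix.add_apply, Matrix.sub_apply, Matrix.smul_apply,
        diagonal_apply_ne _ hij, smul_zero, add_zero, sub_zero]
  have hQ : (120 : ℝ) • (1 : Matrix n n ℝ) - 60 • A + 12 • A ^ 2 - A ^ 3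
      = U * diagonal qd * V := by
    rw [h3, h2, h1, e1, ← hdiagQ]
    simp only [Matrix.mul_add, Matrix.add_mul, Matrix.mul_sub, Matrix.sub_mul,
      mul_smul_comm, smul_mul_assoc]
  have hUnitU : IsUnit U := ⟨⟨U, V, hUV, hVU⟩, rfl⟩
  have hUnitV : IsUnit V := ⟨⟨V, U, hVU, hUV⟩, rfl⟩
  have hUnitD : IsUnit (diagonal pd) := by
    rw [Matrix.isUnit_diagonal]
    refine ⟨⟨pd, fun i => (pd i)⁻¹, ?_, ?_⟩, rfl⟩
    · funext i; exact mul_inv_cancel₀ (hpdpos i).ne'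
    · funext i; exact inv_mul_cancel₀ (hpdpos i).ne'
  have hUnitP : IsUnit ((120 : ℝ) • (1 : Matrix n n ℝ) + 60 • A + 12 • A ^ 2 + A ^ 3) := by
    rw [hP]; exact (hUnitU.mul hUnitD).mul hUnitV
  refine ⟨hUnitP, ?_⟩
  have hPinv : ((120 : ℝ) • (1 : Matrix n n ℝ) + 60 • A + 12 • A ^ 2 + A ^ 3)⁻¹
      = U * diagonal (fun i => (pd i)⁻¹) * V := by
    apply inv_eq_right_inv
    rw [hP, key]
    have : (fun i => pd i * (pd i)⁻¹) = fun _ => (1:ℝ) := by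
      funext i; exact mul_inv_cancel₀ (hpdpos i).ne'
    rw [this, ← e1]
  have hM : ((120 : ℝ) • (1 : Matrix n n ℝ) + 60 • A + 12 • A ^ 2 + A ^ 3)⁻¹ *
      ((120 : ℝ) • (1 : Matrix n n ℝ) - 60 • A + 12 • A ^ 2 - A ^ 3)
      = U * diagonal (fun i => (pd i)⁻¹ * qd i) * V := by
    rw [hPinv, hQ, key]
  intro μ hμ
  rw [hM] at hμ
  set f := algebraMap ℝ ℂ with hfdef
  have hmap : (U * diagonal (fun i => (pd i)⁻¹ * qd i) * V).map f
      = U.map f * diagonal (fun i => f ((pd i)⁻¹ * qd i)) * V.map f := by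
    rw [Matrix.map_mul, Matrix.map_mul, diagonal_map (map_zero f)]
  have huv : U.map f * V.map f = 1 := by
    rw [← Matrix.map_mul, hUV, Matrix.map_one f (map_zero f) (map_one f)]
  have hvu : V.map f * U.map f = 1 := by
    rw [← Matrix.map_mul, hVU, Matrix.map_one f (map_zero f) (map_one f)]
  set u : (Matrix n n ℂ)ˣ := ⟨U.map f, V.map f, huv, hvu⟩ with hudef
  have : spectrum ℂ ((U * diagonal (fun i => (pd i)⁻¹ * qd i) * V).map f)
      = Set.range (fun i => f ((pd i)⁻¹ * qd i)) := by
    rw [hmap]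
    have : U.map f * diagonal (fun i => f ((pd i)⁻¹ * qd i)) * V.map f
        = (u : Matrix n n ℂ) * diagonal (fun i => f ((pd i)⁻¹ * qd i)) *
          ((u⁻¹ : (Matrix n n ℂ)ˣ) : Matrix n n ℂ) := rfl
    rw [this, spectrum.units_conjugate, _root_.spectrum_diagonal]
  rw [this] at hμ
  obtain ⟨i, rfl⟩ := hμ
  have habs : |(pd i)⁻¹ * qd i| < 1 := by
    have hq : |qd i| < pd i := by
      rw [abs_lt]
      constructor
      · simp only [hpddef, hqddef]; nlinarith [sq_nonneg (d i), hdpos i]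
      · simp only [hpddef, hqddef]; nlinarith [hdpos i, pow_pos (hdpos i) 3]
    rw [abs_mul, abs_inv, abs_of_pos (hpdpos i), inv_mul_lt_iff₀ (hpdpos i), mul_one]
    exact hq
  simpa only [hfdef, RingHom.coe_coe, Complex.coe_algebraMap, Complex.norm_real, Real.norm_eq_abs] using habs
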